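/- Let φ: ℝ² → ℝ be any polynomial and let 1 ≤ p, q ≤ ∞. If the operator T = T_{[−1,1]²} is of restricted weak type (p,q), then p ≤ q, q ≤ 3p, and 1/q ≥ 3/p − 2. -/

import Mathlib

open MeasureTheory MvPolynomial
open scoped ENNReal

/-- The averaging operator `T_R f(x) = ∫_R f(x₁ − t₁, x₂ − t₂, x₃ − φ(t)) dt`
acting on nonnegative measurable functions on ℝ³. -/
noncomputable def avgOp (φ : ℝ × ℝ → ℝ) (R : Set (ℝ × ℝ))
    (f : ℝ × ℝ × ℝ → ℝ≥0∞) (x : ℝ × ℝ × ℝ) : ℝ≥0∞ :=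
  ∫⁻ t in R, f (x.1 - t.1, x.2.1 - t.2, x.2.2 - φ t)

/-- The bilinear pairing `⟨T_R χ_E, χ_F⟩`. -/
noncomputable def pairing (φ : ℝ × ℝ → ℝ) (R : Set (ℝ × ℝ))
    (E F : Set (ℝ × ℝ × ℝ)) : ℝ≥0∞ :=
  ∫⁻ x, avgOp φ R (E.indicator 1) x * F.indicator 1 x

/-- `T_R` is of restricted weak type `(p,q)`, written in terms of the reciprocals
`pinv = 1/p`, `qinv = 1/q` (so `1 ≤ p, q ≤ ∞` corresponds to `pinv, qinv ∈ [0,1]`):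
there is `C < ∞` with `⟨T_R χ_E, χ_F⟩ ≤ C |E|^{1/p} |F|^{1−1/q}` for all measurable
`E, F ⊆ ℝ³` of finite measure. -/
def RWT (φ : ℝ × ℝ → ℝ) (R : Set (ℝ × ℝ)) (pinv qinv : ℝ) : Prop :=
  ∃ C : ℝ, 0 ≤ C ∧ ∀ E F : Set (ℝ × ℝ × ℝ), MeasurableSet E → MeasurableSet F →
    volume E < ⊤ → volume F < ⊤ →
    pairing φ R E F ≤ ENNReal.ofReal C * volume E ^ pinv * volume F ^ (1 - qinv)

/-- The unit square `[−1,1]²` in ℝ². -/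
def unitSquare : Set (ℝ × ℝ) := Set.Icc ((-1, -1) : ℝ × ℝ) (1, 1)

/-! ### Auxiliary lemmas -/

/-- Exponent comparison for small δ. -/
lemma rpow_exp_le_small {A B a b η : ℝ} (hA : 0 < A) (hB : 0 < B) (hη : 0 < η)
    (h : ∀ δ : ℝ, 0 < δ → δ < η → A * δ ^ a ≤ B * δ ^ b) : b ≤ a := by
  by_contra hab
  push_neg at hab
  have he0 : 0 < b - a := by linarith
  set δ₁ := (A / (2 * B)) ^ (b - a)⁻¹ with hδ₁
  have hδ₁pos : 0 < δ₁ := Real.rpow_pos_of_pos (by positivity) _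
  set δ := min (η / 2) δ₁ with hδ
  have hδpos : 0 < δ := lt_min (by linarith) hδ₁pos
  have hδη : δ < η := lt_of_le_of_lt (min_le_left _ _) (by linarith)
  have h1 := h δ hδpos hδη
  have hsplit : δ ^ b = δ ^ (b - a) * δ ^ a := by
    rw [← Real.rpow_add hδpos]; ring_nf
  have hde : δ ^ (b - a) ≤ A / (2 * B) := by
    calc δ ^ (b - a) ≤ δ₁ ^ (b - a) :=
          Real.rpow_le_rpow hδpos.le (min_le_right _ _) he0.le
      _ = A / (2 * B) := by
          rw [hδ₁, ← Real.rpow_mul (by positivity), inv_mul_cancel₀ he0.ne', Real.rpow_one]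
  have hpa : 0 < δ ^ a := Real.rpow_pos_of_pos hδpos a
  have h2 : A * δ ^ a ≤ (A / 2) * δ ^ a := by
    calc A * δ ^ a ≤ B * (δ ^ (b - a) * δ ^ a) := by rw [← hsplit]; exact h1
      _ ≤ B * (A / (2 * B) * δ ^ a) := by
          have := mul_le_mul_of_nonneg_right hde hpa.le
          exact mul_le_mul_of_nonneg_left this hB.le
      _ = (A / 2) * δ ^ a := by field_simp
  nlinarith

/-- Exponent comparison for large R. -/
lemma rpow_exp_le_large {A B a b R₀ : ℝ} (hA : 0 < A) (hB : 0 < B)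
    (h : ∀ R : ℝ, R₀ ≤ R → A * R ^ a ≤ B * R ^ b) : a ≤ b := by
  by_contra hab
  push_neg at hab
  have he0 : 0 < a - b := by linarith
  set R₁ := (2 * B / A) ^ (a - b)⁻¹ with hR₁
  set R := max R₀ (max 1 R₁) with hR
  have hR1 : (1:ℝ) ≤ R := le_trans (le_max_left _ _) (le_max_right _ _)
  have hRpos : 0 < R := lt_of_lt_of_le one_pos hR1
  have h1 := h R (le_max_left _ _)
  have hsplit : R ^ a = R ^ (a - b) * R ^ b := by
    rw [← Real.rpow_add hRpos]; ring_nf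
  have hde : 2 * B / A ≤ R ^ (a - b) := by
    calc (2 * B / A) = R₁ ^ (a - b) := by
          rw [hR₁, ← Real.rpow_mul (by positivity), inv_mul_cancel₀ he0.ne', Real.rpow_one]
      _ ≤ R ^ (a - b) := by
          exact Real.rpow_le_rpow (by positivity)
            (le_trans (le_max_right _ _) (le_max_right _ _)) he0.le
  have hpb : 0 < R ^ b := Real.rpow_pos_of_pos hRpos b
  have h2 : 2 * B * R ^ b ≤ B * R ^ b := by
    calc 2 * B * R ^ b = A * ((2 * B / A) * R ^ b) := by field_simp
      _ ≤ A * (R ^ (a - b) * R ^ b) := by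
          have := mul_le_mul_of_nonneg_right hde hpb.le
          exact mul_le_mul_of_nonneg_left this hA.le
      _ = A * R ^ a := by rw [hsplit]
      _ ≤ B * R ^ b := h1
  nlinarith

/-- 3D graph neighborhood. -/
def graphNbhd (h : ℝ × ℝ → ℝ) (a₁ b₁ a₂ b₂ c : ℝ) : Set (ℝ × ℝ × ℝ) :=
  {x | x.1 ∈ Set.Icc a₁ b₁ ∧ x.2.1 ∈ Set.Icc a₂ b₂ ∧
    x.2.2 ∈ Set.Icc (h (x.1, x.2.1) - c) (h (x.1, x.2.1) + c)}

lemma measurableSet_graphNbhd {h : ℝ × ℝ → ℝ} (hh : Measurable h) (a₁ b₁ a₂ b₂ c : ℝ) :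
    MeasurableSet (graphNbhd h a₁ b₁ a₂ b₂ c) := by
  have hm : Measurable (fun x : ℝ × ℝ × ℝ => h (x.1, x.2.1)) :=
    hh.comp (measurable_fst.prodMk (measurable_fst.comp measurable_snd))
  have : graphNbhd h a₁ b₁ a₂ b₂ c =
      ({x : ℝ × ℝ × ℝ | a₁ ≤ x.1} ∩ {x | x.1 ≤ b₁}) ∩
      (({x | a₂ ≤ x.2.1} ∩ {x | x.2.1 ≤ b₂}) ∩
       ({x | h (x.1, x.2.1) - c ≤ x.2.2} ∩ {x | x.2.2 ≤ h (x.1, x.2.1) + c})) := by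
    ext x; simp [graphNbhd, Set.mem_Icc]
  rw [this]
  refine MeasurableSet.inter (MeasurableSet.inter ?_ ?_)
    (MeasurableSet.inter (MeasurableSet.inter ?_ ?_) (MeasurableSet.inter ?_ ?_))
  · exact measurableSet_le measurable_const measurable_fst
  · exact measurableSet_le measurable_fst measurable_const
  · exact measurableSet_le measurable_const (measurable_fst.comp measurable_snd)
  · exact measurableSet_le (measurable_fst.comp measurable_snd) measurable_const
  · exact measurableSet_le (hm.sub measurable_const) (measurable_snd.comp measurable_snd)
  · exact measurableSet_le (measurable_snd.comp measurable_snd) (hm.add measurable_const)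

/-- 2D graph neighborhood volume. -/
lemma volume_graph2 (k : ℝ → ℝ) (hk : Measurable k) (a b c : ℝ) :
    volume {y : ℝ × ℝ | y.1 ∈ Set.Icc a b ∧ y.2 ∈ Set.Icc (k y.1 - c) (k y.1 + c)}
      = ENNReal.ofReal (b - a) * ENNReal.ofReal (2 * c) := by
  have hmeas : MeasurableSet {y : ℝ × ℝ | y.1 ∈ Set.Icc a b ∧
      y.2 ∈ Set.Icc (k y.1 - c) (k y.1 + c)} := by
    have : {y : ℝ × ℝ | y.1 ∈ Set.Icc a b ∧ y.2 ∈ Set.Icc (k y.1 - c) (k y.1 + c)} =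
        ({y : ℝ × ℝ | a ≤ y.1} ∩ {y | y.1 ≤ b}) ∩
        ({y | k y.1 - c ≤ y.2} ∩ {y | y.2 ≤ k y.1 + c}) := by
      ext y; simp [Set.mem_Icc]
    rw [this]
    refine ((measurableSet_le measurable_const measurable_fst).inter
      (measurableSet_le measurable_fst measurable_const)).inter
      ((measurableSet_le ((hk.comp measurable_fst).sub measurable_const) measurable_snd).inter
      (measurableSet_le measurable_snd ((hk.comp measurable_fst).add measurable_const)))
  rw [Measure.volume_eq_prod, Measure.prod_apply hmeas]
  have key : ∀ y₁ : ℝ, volume (Prod.mk y₁ ⁻¹'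
      {y : ℝ × ℝ | y.1 ∈ Set.Icc a b ∧ y.2 ∈ Set.Icc (k y.1 - c) (k y.1 + c)})
      = Set.indicator (Set.Icc a b) (fun _ => ENNReal.ofReal (2 * c)) y₁ := by
    intro y₁
    by_cases hy : y₁ ∈ Set.Icc a b
    · have hpre : Prod.mk y₁ ⁻¹'
          {y : ℝ × ℝ | y.1 ∈ Set.Icc a b ∧ y.2 ∈ Set.Icc (k y.1 - c) (k y.1 + c)}
          = Set.Icc (k y₁ - c) (k y₁ + c) := by
        have hy' := hy; rw [Set.mem_Icc] at hy'
        ext z; simp only [Set.mem_preimage, Set.mem_setOf_eq, Set.mem_Icc]; tauto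
      rw [hpre, Real.volume_Icc, Set.indicator_of_mem hy]
      congr 1; ring
    · have hpre : Prod.mk y₁ ⁻¹'
          {y : ℝ × ℝ | y.1 ∈ Set.Icc a b ∧ y.2 ∈ Set.Icc (k y.1 - c) (k y.1 + c)}
          = ∅ := by
        rw [Set.mem_Icc] at hy
        ext z; simp only [Set.mem_preimage, Set.mem_setOf_eq, Set.mem_Icc,
          Set.mem_empty_iff_false, iff_false]; tauto
      rw [hpre, measure_empty, Set.indicator_of_notMem hy]
  simp_rw [key]
  rw [lintegral_indicator measurableSet_Icc, setLIntegral_const, Real.volume_Icc, mul_comm]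

/-- 3D graph neighborhood volume. -/
lemma volume_graphNbhd {h : ℝ × ℝ → ℝ} (hh : Measurable h) (a₁ b₁ a₂ b₂ c : ℝ)
    (h1 : a₁ ≤ b₁) (h2 : a₂ ≤ b₂) (hc : 0 ≤ c) :
    volume (graphNbhd h a₁ b₁ a₂ b₂ c)
      = ENNReal.ofReal ((b₁ - a₁) * ((b₂ - a₂) * (2 * c))) := by
  rw [Measure.volume_eq_prod, Measure.prod_apply (measurableSet_graphNbhd hh a₁ b₁ a₂ b₂ c)]
  have key : ∀ x₁ : ℝ, volume (Prod.mk x₁ ⁻¹' graphNbhd h a₁ b₁ a₂ b₂ c)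
      = Set.indicator (Set.Icc a₁ b₁)
        (fun _ => ENNReal.ofReal (b₂ - a₂) * ENNReal.ofReal (2 * c)) x₁ := by
    intro x₁
    by_cases hx : x₁ ∈ Set.Icc a₁ b₁
    · have hpre : Prod.mk x₁ ⁻¹' graphNbhd h a₁ b₁ a₂ b₂ c
          = {y : ℝ × ℝ | y.1 ∈ Set.Icc a₂ b₂ ∧
              y.2 ∈ Set.Icc (h (x₁, y.1) - c) (h (x₁, y.1) + c)} := by
        have hx' := hx; rw [Set.mem_Icc] at hx'
        ext z; simp only [graphNbhd, Set.mem_preimage, Set.mem_setOf_eq, Set.mem_Icc]; tauto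
      rw [hpre, volume_graph2 (fun u => h (x₁, u))
        (hh.comp (measurable_const.prodMk measurable_id)) a₂ b₂ c,
        Set.indicator_of_mem hx]
    · have hpre : Prod.mk x₁ ⁻¹' graphNbhd h a₁ b₁ a₂ b₂ c = ∅ := by
        rw [Set.mem_Icc] at hx
        ext z; simp only [graphNbhd, Set.mem_preimage, Set.mem_setOf_eq, Set.mem_Icc,
          Set.mem_empty_iff_false, iff_false]; tauto
      rw [hpre, measure_empty, Set.indicator_of_notMem hx]
  simp_rw [key]
  rw [lintegral_indicator measurableSet_Icc, setLIntegral_const, Real.volume_Icc,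
    mul_comm, ← ENNReal.ofReal_mul (by linarith), ← ENNReal.ofReal_mul (by linarith)]

/-- volume of a 3-box. -/
lemma volume_box (a₁ a₂ a₃ b₁ b₂ b₃ : ℝ) (h1 : a₁ ≤ b₁) (h2 : a₂ ≤ b₂) (h3 : a₃ ≤ b₃) :
    volume (Set.Icc ((a₁, a₂, a₃) : ℝ × ℝ × ℝ) (b₁, b₂, b₃))
      = ENNReal.ofReal ((b₁ - a₁) * ((b₂ - a₂) * (b₃ - a₃))) := by
  rw [Set.Icc_prod_eq, Measure.volume_eq_prod, Measure.prod_prod]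
  have : volume (Set.Icc ((a₂, a₃) : ℝ × ℝ) ((b₂, b₃) : ℝ × ℝ))
      = ENNReal.ofReal (b₂ - a₂) * ENNReal.ofReal (b₃ - a₃) := by
    rw [Set.Icc_prod_eq, Measure.volume_eq_prod, Measure.prod_prod, Real.volume_Icc,
      Real.volume_Icc]
  show volume (Set.Icc a₁ b₁) * volume (Set.Icc ((a₂, a₃) : ℝ × ℝ) ((b₂, b₃) : ℝ × ℝ)) = _
  rw [this, Real.volume_Icc, ← ENNReal.ofReal_mul (by linarith), ← ENNReal.ofReal_mul (by linarith)]

/-- volume of a 2-box. -/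
lemma volume_rect (a₁ a₂ b₁ b₂ : ℝ) (h1 : a₁ ≤ b₁) (h2 : a₂ ≤ b₂) :
    volume (Set.Icc ((a₁, a₂) : ℝ × ℝ) (b₁, b₂)) = ENNReal.ofReal ((b₁ - a₁) * (b₂ - a₂)) := by
  rw [Set.Icc_prod_eq, Measure.volume_eq_prod, Measure.prod_prod, Real.volume_Icc,
    Real.volume_Icc, ← ENNReal.ofReal_mul (by linarith)]

lemma volume_unitSquare : volume unitSquare = ENNReal.ofReal 4 := by
  rw [unitSquare, volume_rect _ _ _ _ (by norm_num) (by norm_num)]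
  norm_num

/-- Lower bound for the averaging operator. -/
lemma avg_ge (φ : ℝ × ℝ → ℝ) (E : Set (ℝ × ℝ × ℝ)) (x : ℝ × ℝ × ℝ) (S : Set (ℝ × ℝ))
    (hS : MeasurableSet S) (hsub : S ⊆ unitSquare)
    (hmem : ∀ t ∈ S, (x.1 - t.1, x.2.1 - t.2, x.2.2 - φ t) ∈ E) :
    volume S ≤ avgOp φ unitSquare (E.indicator 1) x := by
  calc volume S = ∫⁻ _ in S, 1 := (setLIntegral_one S).symm
    _ ≤ ∫⁻ t in S, E.indicator 1 (x.1 - t.1, x.2.1 - t.2, x.2.2 - φ t) :=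
        setLIntegral_mono' hS fun t ht => by
          rw [Set.indicator_of_mem (hmem t ht), Pi.one_apply]
    _ ≤ ∫⁻ t in unitSquare, E.indicator 1 (x.1 - t.1, x.2.1 - t.2, x.2.2 - φ t) :=
        lintegral_mono_set hsub
    _ = avgOp φ unitSquare (E.indicator 1) x := rfl

/-- Lower bound for the pairing. -/
lemma pairing_ge (φ : ℝ × ℝ → ℝ) (E F : Set (ℝ × ℝ × ℝ)) (hF : MeasurableSet F) (c : ℝ≥0∞)
    (h : ∀ x ∈ F, c ≤ avgOp φ unitSquare (E.indicator 1) x) :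
    c * volume F ≤ pairing φ unitSquare E F := by
  calc c * volume F = ∫⁻ _ in F, c := (setLIntegral_const F c).symm
    _ ≤ ∫⁻ x in F, avgOp φ unitSquare (E.indicator 1) x * F.indicator 1 x := by
        refine setLIntegral_mono' hF fun x hx => ?_
        rw [Set.indicator_of_mem hx, Pi.one_apply, mul_one]
        exact h x hx
    _ ≤ ∫⁻ x, avgOp φ unitSquare (E.indicator 1) x * F.indicator 1 x :=
        setLIntegral_le_lintegral _ _
    _ = pairing φ unitSquare E F := rfl

/-- Transfer an `ℝ≥0∞` inequality to real numbers. -/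
lemma ofReal_rpow_bound {lhs C vE vF p q : ℝ} (hC : 0 ≤ C) (hvE : 0 ≤ vE) (hvF : 0 ≤ vF)
    (hp : 0 ≤ p) (hq : 0 ≤ q)
    (h : ENNReal.ofReal lhs ≤ ENNReal.ofReal C * ENNReal.ofReal vE ^ p
        * ENNReal.ofReal vF ^ q) :
    lhs ≤ C * vE ^ p * vF ^ q := by
  rw [ENNReal.ofReal_rpow_of_nonneg hvE hp, ENNReal.ofReal_rpow_of_nonneg hvF hq,
    ← ENNReal.ofReal_mul hC, ← ENNReal.ofReal_mul (by positivity)] at h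
  exact (ENNReal.ofReal_le_ofReal_iff (by positivity)).1 h

/-- Smoothness of the polynomial evaluation map. -/
lemma contDiff_poly (φp : MvPolynomial (Fin 2) ℝ) :
    ContDiff ℝ ⊤ (fun t : ℝ × ℝ => eval ![t.1, t.2] φp) := by
  induction φp using MvPolynomial.induction_on with
  | C a => simpa [eval_C] using contDiff_const (c := a)
  | add p q hp hq => simp only [map_add]; exact hp.add hq
  | mul_X p i hp =>
      simp only [map_mul, eval_X]
      refine hp.mul ?_
      fin_cases i
      · simpa using contDiff_fst
      · simpa using contDiff_snd

/-- Lipschitz bound on a box. -/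
lemma exists_lip {g : ℝ × ℝ → ℝ} (hg : ContDiff ℝ ⊤ g) :
    ∃ L : ℝ, 1 ≤ L ∧ ∀ s ∈ Set.Icc ((-2, -2) : ℝ × ℝ) (2, 2),
      ∀ t ∈ Set.Icc ((-2, -2) : ℝ × ℝ) (2, 2), |g s - g t| ≤ L * dist s t := by
  have hd : Differentiable ℝ g := hg.differentiable (by simp)
  have hfc : Continuous (fderiv ℝ g) := hg.continuous_fderiv (by simp)
  obtain ⟨Cb, hCb⟩ :=
    (isCompact_Icc (a := ((-2, -2) : ℝ × ℝ)) (b := (2, 2))).exists_bound_of_continuousOn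
      hfc.continuousOn
  refine ⟨max Cb 1, le_max_right _ _, fun s hs t ht => ?_⟩
  have hCb' : ∀ x ∈ Set.Icc ((-2, -2) : ℝ × ℝ) (2, 2), ‖fderiv ℝ g x‖ ≤ max Cb 1 :=
    fun x hx => (hCb x hx).trans (le_max_left _ _)
  have key := (convex_Icc ((-2, -2) : ℝ × ℝ) (2, 2)).norm_image_sub_le_of_norm_fderiv_le
    (fun x _ => hd x) hCb' ht hs
  rw [Real.norm_eq_abs] at key
  calc |g s - g t| ≤ max Cb 1 * ‖s - t‖ := key
    _ = max Cb 1 * dist s t := by rw [dist_eq_norm]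

set_option maxHeartbeats 1600000 in
/-- For any polynomial φ on ℝ², if `T = T_{[−1,1]²}` is of restricted weak type `(p,q)`
(`1 ≤ p, q ≤ ∞`), then `p ≤ q`, `q ≤ 3p` and `1/q ≥ 3/p − 2`. -/
theorem stmt_9 (φp : MvPolynomial (Fin 2) ℝ) (pinv qinv : ℝ)
    (hp0 : 0 ≤ pinv) (hp1 : pinv ≤ 1) (hq0 : 0 ≤ qinv) (hq1 : qinv ≤ 1)
    (hrwt : RWT (fun t => eval ![t.1, t.2] φp) unitSquare pinv qinv) :
    qinv ≤ pinv ∧ pinv / 3 ≤ qinv ∧ 3 * pinv - 2 ≤ qinv := by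
  obtain ⟨C, hC0, hbound⟩ := hrwt
  set g : ℝ × ℝ → ℝ := fun t => eval ![t.1, t.2] φp with hgdef
  have hgC : ContDiff ℝ ⊤ g := contDiff_poly φp
  have hgcont : Continuous g := hgC.continuous
  have hgm : Measurable g := hgcont.measurable
  obtain ⟨L, hL1, hLip⟩ := exists_lip hgC
  have hL0 : 0 < L := by linarith
  obtain ⟨M₀, hM₀⟩ :=
    (isCompact_Icc (a := ((-2, -2) : ℝ × ℝ)) (b := (2, 2))).exists_bound_of_continuousOn
      hgcont.continuousOn
  set M := max M₀ 0 with hMdef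
  have hM0 : 0 ≤ M := le_max_right _ _
  -- membership unfolding helpers
  have mem3 : ∀ (a₁ a₂ a₃ b₁ b₂ b₃ : ℝ) (x : ℝ × ℝ × ℝ),
      x ∈ Set.Icc ((a₁, a₂, a₃) : ℝ × ℝ × ℝ) (b₁, b₂, b₃) ↔
      (a₁ ≤ x.1 ∧ x.1 ≤ b₁) ∧ (a₂ ≤ x.2.1 ∧ x.2.1 ≤ b₂) ∧ (a₃ ≤ x.2.2 ∧ x.2.2 ≤ b₃) := by
    intro a₁ a₂ a₃ b₁ b₂ b₃ x
    simp [Set.mem_Icc, Prod.le_def]; tauto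
  have mem2 : ∀ (a₁ a₂ b₁ b₂ : ℝ) (t : ℝ × ℝ),
      t ∈ Set.Icc ((a₁, a₂) : ℝ × ℝ) (b₁, b₂) ↔
      (a₁ ≤ t.1 ∧ t.1 ≤ b₁) ∧ (a₂ ≤ t.2 ∧ t.2 ≤ b₂) := by
    intro a₁ a₂ b₁ b₂ t
    simp [Set.mem_Icc, Prod.le_def]; tauto
  have hdist : ∀ s t : ℝ × ℝ, dist s t = max |s.1 - t.1| |s.2 - t.2| := by
    intro s t
    rw [Prod.dist_eq, Real.dist_eq, Real.dist_eq]
  have hM : ∀ t : ℝ × ℝ, t ∈ Set.Icc ((-2, -2) : ℝ × ℝ) (2, 2) → |g t| ≤ M := by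
    intro t ht
    calc |g t| = ‖g t‖ := (Real.norm_eq_abs _).symm
      _ ≤ M₀ := hM₀ t ht
      _ ≤ M := le_max_left _ _
  -- Claim 1 : qinv ≤ pinv, via large boxes
  have claim1 : qinv ≤ pinv := by
    have key : ∀ R : ℝ, 2 * M + 2 ≤ R →
        4 * R ^ (3:ℝ) ≤ (64 * (C + 1)) * R ^ (3 * pinv + 3 - 3 * qinv) := by
      intro R hR
      have hR2 : (2:ℝ) ≤ R := by linarith
      have hR0 : (0:ℝ) < R := by linarith
      set E := Set.Icc ((-R, -R, -R) : ℝ × ℝ × ℝ) (R, R, R) with hEdef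
      set F := Set.Icc ((-(R-1), -(R-1), -(R-M)) : ℝ × ℝ × ℝ) (R-1, R-1, R-M) with hFdef
      have hvolE : volume E = ENNReal.ofReal (2*R * (2*R * (2*R))) := by
        rw [hEdef, volume_box _ _ _ _ _ _ (by linarith) (by linarith) (by linarith)]
        congr 1; ring
      have hvolF : volume F = ENNReal.ofReal (2*(R-1) * (2*(R-1) * (2*(R-M)))) := by
        rw [hFdef, volume_box _ _ _ _ _ _ (by linarith) (by linarith) (by linarith)]
        congr 1; ring
      have hFE : F ⊆ E := by
        intro x hx
        rw [hFdef, mem3] at hx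
        rw [hEdef, mem3]
        refine ⟨⟨?_, ?_⟩, ⟨?_, ?_⟩, ?_, ?_⟩ <;>
          linarith [hx.1.1, hx.1.2, hx.2.1.1, hx.2.1.2, hx.2.2.1, hx.2.2.2]
      have hpair : ENNReal.ofReal 4 * volume F ≤ pairing g unitSquare E F := by
        apply pairing_ge _ _ _ measurableSet_Icc
        intro x hx
        rw [← volume_unitSquare]
        apply avg_ge g E x unitSquare measurableSet_Icc (subset_refl _)
        intro t ht
        rw [mem3] at hx
        rw [unitSquare, mem2] at ht
        have htbox : t ∈ Set.Icc ((-2, -2) : ℝ × ℝ) (2, 2) := by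
          rw [mem2]; constructor <;> constructor <;> linarith [ht.1.1, ht.1.2, ht.2.1, ht.2.2]
        have hMg := hM t htbox
        rw [abs_le] at hMg
        rw [hEdef, mem3]
        dsimp only
        refine ⟨⟨by linarith [hx.1.1, ht.1.2], by linarith [hx.1.2, ht.1.1]⟩,
          ⟨by linarith [hx.2.1.1, ht.2.2], by linarith [hx.2.1.2, ht.2.1]⟩,
          ⟨by linarith [hx.2.2.1, hMg.2], by linarith [hx.2.2.2, hMg.1]⟩⟩
      have hle := hbound E F measurableSet_Icc measurableSet_Icc
        (by rw [hvolE]; exact ENNReal.ofReal_lt_top) (by rw [hvolF]; exact ENNReal.ofReal_lt_top)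
      have h2 : ENNReal.ofReal (4 * (2*(R-1) * (2*(R-1) * (2*(R-M)))))
          ≤ ENNReal.ofReal C * ENNReal.ofReal (2*R * (2*R * (2*R))) ^ pinv
            * ENNReal.ofReal (2*R * (2*R * (2*R))) ^ (1 - qinv) := by
        rw [ENNReal.ofReal_mul (by norm_num), ← hvolF, ← hvolE]
        refine le_trans hpair (le_trans hle ?_)
        have : volume F ^ (1 - qinv) ≤ volume E ^ (1 - qinv) :=
          ENNReal.rpow_le_rpow (measure_mono hFE) (by linarith)
        exact mul_le_mul_of_nonneg_left this (zero_le')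
      have hreal := ofReal_rpow_bound hC0 (by positivity) (by positivity) hp0
        (by linarith) h2
      have hr3 : R ^ (3:ℝ) = R * (R * R) := by
        rw [show (3:ℝ) = ((3:ℕ):ℝ) by norm_num, Real.rpow_natCast]; ring
      have hRM : R / 2 ≥ M := by linarith
      have step1 : 4 * R ^ (3:ℝ) ≤ 4 * (2*(R-1) * (2*(R-1) * (2*(R-M)))) := by
        rw [hr3]
        have e1 : R ≤ 2*(R-1) := by linarith
        have e2 : R ≤ 2*(R-M) := by linarith
        have inner : R * R ≤ (2*(R-1)) * (2*(R-M)) :=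
          mul_le_mul e1 e2 hR0.le (by linarith)
        have outer : R * (R * R) ≤ (2*(R-1)) * ((2*(R-1)) * (2*(R-M))) :=
          mul_le_mul e1 inner (by positivity) (by linarith)
        linarith
      have hvE8 : 2*R * (2*R * (2*R)) = 8 * R ^ (3:ℝ) := by rw [hr3]; ring
      have step2 : C * (2*R * (2*R * (2*R))) ^ pinv * (2*R * (2*R * (2*R))) ^ (1 - qinv)
          ≤ (64 * (C + 1)) * R ^ (3 * pinv + 3 - 3 * qinv) := by
        rw [hvE8, Real.mul_rpow (by norm_num) (by positivity),
          Real.mul_rpow (by norm_num) (by positivity),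
          ← Real.rpow_mul hR0.le, ← Real.rpow_mul hR0.le]
        have h8p : (8:ℝ) ^ pinv ≤ 8 := by
          calc (8:ℝ) ^ pinv ≤ (8:ℝ) ^ (1:ℝ) :=
            Real.rpow_le_rpow_of_exponent_le (by norm_num) hp1
          _ = 8 := Real.rpow_one 8
        have h8q : (8:ℝ) ^ (1 - qinv) ≤ 8 := by
          calc (8:ℝ) ^ (1 - qinv) ≤ (8:ℝ) ^ (1:ℝ) :=
            Real.rpow_le_rpow_of_exponent_le (by norm_num) (by linarith)
          _ = 8 := Real.rpow_one 8
        have h8p0 : (0:ℝ) < (8:ℝ) ^ pinv := Real.rpow_pos_of_pos (by norm_num) _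
        have h8q0 : (0:ℝ) < (8:ℝ) ^ (1 - qinv) := Real.rpow_pos_of_pos (by norm_num) _
        have hRp0 : (0:ℝ) < R ^ (3 * pinv) := Real.rpow_pos_of_pos hR0 _
        have hRq0 : (0:ℝ) < R ^ (3 * (1 - qinv)) := Real.rpow_pos_of_pos hR0 _
        have hcomb : R ^ (3 * pinv) * R ^ (3 * (1 - qinv))
            = R ^ (3 * pinv + 3 - 3 * qinv) := by
          rw [← Real.rpow_add hR0]; ring_nf
        calc C * (8 ^ pinv * R ^ (3 * pinv)) * (8 ^ (1 - qinv) * R ^ (3 * (1 - qinv)))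
            = (C * 8 ^ pinv * 8 ^ (1 - qinv)) * (R ^ (3 * pinv) * R ^ (3 * (1 - qinv))) := by
              ring
          _ ≤ (64 * (C + 1)) * (R ^ (3 * pinv) * R ^ (3 * (1 - qinv))) := by
              have hab : (8:ℝ) ^ pinv * 8 ^ (1 - qinv) ≤ 64 := by
                nlinarith [mul_le_mul h8p h8q h8q0.le (show (0:ℝ) ≤ 8 by norm_num)]
              have : C * 8 ^ pinv * 8 ^ (1 - qinv) ≤ 64 * (C + 1) := by nlinarith
              exact mul_le_mul_of_nonneg_right this (by positivity)
          _ = (64 * (C + 1)) * R ^ (3 * pinv + 3 - 3 * qinv) := by rw [hcomb]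
      linarith [le_trans (le_trans step1 hreal) step2]
    have := rpow_exp_le_large (by norm_num) (by positivity) key
    linarith
  -- Claim 2 : pinv ≤ 3 * qinv, via graph neighborhood E and small cube F
  have claim2 : pinv ≤ 3 * qinv := by
    set h : ℝ × ℝ → ℝ := fun u => -g (-u.1, -u.2) with hhdef
    have hhm : Measurable h :=
      (hgm.comp ((measurable_fst.neg).prodMk (measurable_snd.neg))).neg
    have key : ∀ δ : ℝ, 0 < δ → δ < 1/2 →
        (1/4) * δ ^ (3:ℝ)
          ≤ ((C + 1) * (8 * (L + 1)) ^ pinv) * δ ^ (pinv + 3 * (1 - qinv)) := by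
      intro δ hδ0 hδh
      set E := graphNbhd h (-1) 1 (-1) 1 ((L + 1) * δ) with hEdef
      set F := Set.Icc ((0, 0, 0) : ℝ × ℝ × ℝ) (δ, δ, δ) with hFdef
      have hvolE : volume E = ENNReal.ofReal (2 * (2 * (2 * ((L + 1) * δ)))) := by
        rw [hEdef, volume_graphNbhd hhm _ _ _ _ _ (by norm_num) (by norm_num)
          (by positivity)]
        congr 1; ring
      have hvolF : volume F = ENNReal.ofReal (δ * (δ * δ)) := by
        rw [hFdef, volume_box _ _ _ _ _ _ hδ0.le hδ0.le hδ0.le]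
        congr 1; ring
      set S := Set.Icc ((-1 + δ, -1 + δ) : ℝ × ℝ) ((0:ℝ), (0:ℝ)) with hSdef
      have hvolS : volume S = ENNReal.ofReal ((1 - δ) * (1 - δ)) := by
        rw [hSdef, volume_rect _ _ _ _ (by linarith) (by linarith)]
        congr 1; ring
      have hpair : ENNReal.ofReal (1/4) * volume F ≤ pairing g unitSquare E F := by
        apply pairing_ge _ _ _ measurableSet_Icc
        intro x hx
        refine le_trans ?_ (avg_ge g E x S measurableSet_Icc ?_ ?_)
        · rw [hvolS]
          apply ENNReal.ofReal_le_ofReal; nlinarith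
        · intro t ht
          rw [hSdef, mem2] at ht
          rw [unitSquare, mem2]
          constructor <;> constructor <;> linarith [ht.1.1, ht.1.2, ht.2.1, ht.2.2]
        · intro t ht
          rw [mem2] at ht
          rw [mem3] at hx
          obtain ⟨⟨hx11, hx12⟩, ⟨hx21, hx22⟩, hx31, hx32⟩ := hx
          obtain ⟨⟨ht11, ht12⟩, ht21, ht22⟩ := ht
          -- Lipschitz estimate
          have hbox1 : t ∈ Set.Icc ((-2, -2) : ℝ × ℝ) (2, 2) := by
            rw [mem2]; constructor <;> constructor <;> linarith
          have hbox2 : ((t.1 - x.1, t.2 - x.2.1) : ℝ × ℝ) ∈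
              Set.Icc ((-2, -2) : ℝ × ℝ) (2, 2) := by
            rw [mem2]; constructor <;> constructor <;> simp <;> linarith
          have hlip := hLip _ hbox2 t hbox1
          have hdle : dist ((t.1 - x.1, t.2 - x.2.1) : ℝ × ℝ) t ≤ δ := by
            rw [hdist]
            apply max_le
            · simp only []
              rw [show (t.1 - x.1) - t.1 = -x.1 by ring, abs_neg, abs_of_nonneg hx11]
              exact hx12
            · simp only []
              rw [show (t.2 - x.2.1) - t.2 = -x.2.1 by ring, abs_neg, abs_of_nonneg hx21]
              exact hx22
          have hgdiff : |g (t.1 - x.1, t.2 - x.2.1) - g t| ≤ L * δ :=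
            le_trans hlip (mul_le_mul_of_nonneg_left hdle hL0.le)
          rw [abs_le] at hgdiff
          rw [hEdef]
          simp only [graphNbhd, Set.mem_setOf_eq, Set.mem_Icc, hhdef]
          have hsimp : ((-(x.1 - t.1), -(x.2.1 - t.2)) : ℝ × ℝ) = (t.1 - x.1, t.2 - x.2.1) := by
            rw [Prod.mk.injEq]; constructor <;> ring
          rw [hsimp]
          refine ⟨⟨by linarith, by linarith⟩, ⟨by linarith, by linarith⟩,
            by linarith, by linarith⟩
      have hle := hbound E F (measurableSet_graphNbhd hhm _ _ _ _ _) measurableSet_Icc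
        (by rw [hvolE]; exact ENNReal.ofReal_lt_top) (by rw [hvolF]; exact ENNReal.ofReal_lt_top)
      have h2 : ENNReal.ofReal ((1/4) * (δ * (δ * δ)))
          ≤ ENNReal.ofReal C * ENNReal.ofReal (2 * (2 * (2 * ((L + 1) * δ)))) ^ pinv
            * ENNReal.ofReal (δ * (δ * δ)) ^ (1 - qinv) := by
        rw [ENNReal.ofReal_mul (by norm_num), ← hvolF, ← hvolE]
        exact le_trans hpair hle
      have hreal := ofReal_rpow_bound hC0 (by positivity) (by positivity) hp0
        (by linarith) h2
      have hd3 : δ * (δ * δ) = δ ^ (3:ℝ) := by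
        rw [show (3:ℝ) = ((3:ℕ):ℝ) by norm_num, Real.rpow_natCast]; ring
      have hEreal : 2 * (2 * (2 * ((L + 1) * δ))) = (8 * (L + 1)) * δ := by ring
      have step2 : C * (2 * (2 * (2 * ((L + 1) * δ)))) ^ pinv * (δ * (δ * δ)) ^ (1 - qinv)
          ≤ ((C + 1) * (8 * (L + 1)) ^ pinv) * δ ^ (pinv + 3 * (1 - qinv)) := by
        rw [hEreal, hd3, Real.mul_rpow (by positivity) hδ0.le,
          ← Real.rpow_mul hδ0.le]
        have hb0 : (0:ℝ) < (8 * (L + 1)) ^ pinv := Real.rpow_pos_of_pos (by positivity) _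
        have hd0 : (0:ℝ) < δ ^ (pinv + 3 * (1 - qinv)) := Real.rpow_pos_of_pos hδ0 _
        calc C * ((8 * (L + 1)) ^ pinv * δ ^ pinv) * δ ^ (3 * (1 - qinv))
            = (C * (8 * (L + 1)) ^ pinv) * (δ ^ pinv * δ ^ (3 * (1 - qinv))) := by ring
          _ = (C * (8 * (L + 1)) ^ pinv) * δ ^ (pinv + 3 * (1 - qinv)) := by
              rw [← Real.rpow_add hδ0]
          _ ≤ ((C + 1) * (8 * (L + 1)) ^ pinv) * δ ^ (pinv + 3 * (1 - qinv)) := by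
              have : C * (8 * (L + 1)) ^ pinv ≤ (C + 1) * (8 * (L + 1)) ^ pinv := by
                nlinarith
              exact mul_le_mul_of_nonneg_right this hd0.le
      calc (1/4) * δ ^ (3:ℝ) = (1/4) * (δ * (δ * δ)) := by rw [hd3]
        _ ≤ _ := le_trans hreal step2
    have := rpow_exp_le_small (by norm_num) (by positivity) (by norm_num : (0:ℝ) < 1/2) key
    linarith
  -- Claim 3 : 3 * pinv - 2 ≤ qinv, via small cube E and graph neighborhood F
  have claim3 : 3 * pinv - 2 ≤ qinv := by
    have key : ∀ δ : ℝ, 0 < δ → δ < 1/2 →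
        (2 / (L * L)) * δ ^ (3:ℝ)
          ≤ ((C + 1) * (64:ℝ) ^ pinv * (2:ℝ) ^ (1 - qinv)) * δ ^ (3 * pinv + (1 - qinv)) := by
      intro δ hδ0 hδh
      set r := δ / L with hrdef
      have hr0 : 0 < r := by positivity
      have hrδ : r ≤ δ := by
        rw [hrdef, div_le_iff₀ hL0]; nlinarith
      set E := Set.Icc ((-(2*δ), -(2*δ), -(2*δ)) : ℝ × ℝ × ℝ) (2*δ, 2*δ, 2*δ) with hEdef
      set F := graphNbhd g 0 1 0 1 δ with hFdef
      have hvolE : volume E = ENNReal.ofReal (4*δ * (4*δ * (4*δ))) := by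
        rw [hEdef, volume_box _ _ _ _ _ _ (by linarith) (by linarith) (by linarith)]
        congr 1; ring
      have hvolF : volume F = ENNReal.ofReal (1 * (1 * (2*δ))) := by
        rw [hFdef, volume_graphNbhd hgm _ _ _ _ _ (by norm_num) (by norm_num) hδ0.le]
        congr 1; ring
      have hpair : ENNReal.ofReal (r * r) * volume F ≤ pairing g unitSquare E F := by
        apply pairing_ge _ _ _ (measurableSet_graphNbhd hgm _ _ _ _ _)
        intro x hx
        simp only [graphNbhd, Set.mem_setOf_eq, Set.mem_Icc] at hx
        obtain ⟨⟨hx11, hx12⟩, ⟨hx21, hx22⟩, hx31, hx32⟩ := hx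
        set S := Set.Icc ((x.1 - r, x.2.1 - r) : ℝ × ℝ) (x.1, x.2.1) with hSdef
        have hvolS : volume S = ENNReal.ofReal (r * r) := by
          rw [hSdef, volume_rect _ _ _ _ (by linarith) (by linarith)]
          congr 1; ring
        rw [← hvolS]
        apply avg_ge g E x S measurableSet_Icc
        · intro t ht
          rw [hSdef, mem2] at ht
          rw [unitSquare, mem2]
          constructor <;> constructor <;> linarith [ht.1.1, ht.1.2, ht.2.1, ht.2.2]
        · intro t ht
          rw [hSdef, mem2] at ht
          obtain ⟨⟨ht11, ht12⟩, ht21, ht22⟩ := ht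
          have hbox1 : t ∈ Set.Icc ((-2, -2) : ℝ × ℝ) (2, 2) := by
            rw [mem2]; constructor <;> constructor <;> linarith
          have hbox2 : ((x.1, x.2.1) : ℝ × ℝ) ∈ Set.Icc ((-2, -2) : ℝ × ℝ) (2, 2) := by
            rw [mem2]; constructor <;> constructor <;> simp <;> linarith
          have hlip := hLip _ hbox2 t hbox1
          have hdle : dist ((x.1, x.2.1) : ℝ × ℝ) t ≤ r := by
            rw [hdist]
            apply max_le
            · simp only []
              rw [abs_of_nonneg (by linarith)]; linarith
            · simp only []
              rw [abs_of_nonneg (by linarith)]; linarith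
          have hgdiff : |g (x.1, x.2.1) - g t| ≤ L * r :=
            le_trans hlip (mul_le_mul_of_nonneg_left hdle hL0.le)
          have hLr : L * r = δ := by
            rw [hrdef]; field_simp
          rw [hLr] at hgdiff
          rw [abs_le] at hgdiff
          rw [hEdef, mem3]
          dsimp only
          refine ⟨⟨by linarith, by linarith⟩, ⟨by linarith, by linarith⟩,
            by linarith, by linarith⟩
      have hle := hbound E F measurableSet_Icc (measurableSet_graphNbhd hgm _ _ _ _ _)
        (by rw [hvolE]; exact ENNReal.ofReal_lt_top) (by rw [hvolF]; exact ENNReal.ofReal_lt_top)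
      have h2 : ENNReal.ofReal ((r * r) * (1 * (1 * (2*δ))))
          ≤ ENNReal.ofReal C * ENNReal.ofReal (4*δ * (4*δ * (4*δ))) ^ pinv
            * ENNReal.ofReal (1 * (1 * (2*δ))) ^ (1 - qinv) := by
        rw [ENNReal.ofReal_mul (by positivity), ← hvolF, ← hvolE]
        exact le_trans hpair hle
      have hreal := ofReal_rpow_bound hC0 (by positivity) (by positivity) hp0
        (by linarith) h2
      have hd3 : δ * (δ * δ) = δ ^ (3:ℝ) := by
        rw [show (3:ℝ) = ((3:ℕ):ℝ) by norm_num, Real.rpow_natCast]; ring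
      have step1 : (2 / (L * L)) * δ ^ (3:ℝ) = (r * r) * (1 * (1 * (2*δ))) := by
        rw [← hd3, hrdef]; field_simp
      have step2 : C * (4*δ * (4*δ * (4*δ))) ^ pinv * (1 * (1 * (2*δ))) ^ (1 - qinv)
          ≤ ((C + 1) * (64:ℝ) ^ pinv * (2:ℝ) ^ (1 - qinv)) * δ ^ (3 * pinv + (1 - qinv)) := by
        have he1 : 4*δ * (4*δ * (4*δ)) = 64 * (δ * (δ * δ)) := by ring
        have he2 : 1 * (1 * (2*δ)) = 2 * δ := by ring
        rw [he1, he2, hd3, Real.mul_rpow (by norm_num) (by positivity),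
          Real.mul_rpow (by norm_num) hδ0.le, ← Real.rpow_mul hδ0.le]
        have h640 : (0:ℝ) < (64:ℝ) ^ pinv := Real.rpow_pos_of_pos (by norm_num) _
        have h20 : (0:ℝ) < (2:ℝ) ^ (1 - qinv) := Real.rpow_pos_of_pos (by norm_num) _
        have hd0 : (0:ℝ) < δ ^ (3 * pinv + (1 - qinv)) := Real.rpow_pos_of_pos hδ0 _
        calc C * ((64:ℝ) ^ pinv * δ ^ (3 * pinv)) * ((2:ℝ) ^ (1 - qinv) * δ ^ (1 - qinv))
            = (C * (64:ℝ) ^ pinv * (2:ℝ) ^ (1 - qinv))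
              * (δ ^ (3 * pinv) * δ ^ (1 - qinv)) := by ring
          _ = (C * (64:ℝ) ^ pinv * (2:ℝ) ^ (1 - qinv)) * δ ^ (3 * pinv + (1 - qinv)) := by
              rw [← Real.rpow_add hδ0]
          _ ≤ ((C + 1) * (64:ℝ) ^ pinv * (2:ℝ) ^ (1 - qinv))
              * δ ^ (3 * pinv + (1 - qinv)) := by
              have : C * (64:ℝ) ^ pinv * (2:ℝ) ^ (1 - qinv)
                  ≤ (C + 1) * (64:ℝ) ^ pinv * (2:ℝ) ^ (1 - qinv) := by nlinarith
              exact mul_le_mul_of_nonneg_right this hd0.le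
      calc (2 / (L * L)) * δ ^ (3:ℝ) = (r * r) * (1 * (1 * (2*δ))) := step1
        _ ≤ _ := le_trans hreal step2
    have := rpow_exp_le_small (by positivity) (by positivity)
      (by norm_num : (0:ℝ) < 1/2) key
    linarith
  exact ⟨claim1, by linarith, claim3⟩
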